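/- Let C ⊆ ℝ^p be a compact, α_C-strongly convex set and let F : ℝ^p → ℝ be convex, differentiable and τ_u-smooth, with 0 < r ≤ ‖∇F(x)‖₂ for all x ∈ C. Let x_* be a minimizer of F over C, let Δ ≥ 0, and set η = min{1, α_C r/(4τ_u)} and c = max{1/2, 1 − α_C r/(8τ_u)}. Suppose (x_t)_{t≥0} is a sequence with x₀ ∈ C such that for every t there exists v_t ∈ C with v_tᵀ∇F(x_t) ≤ min_{v∈C} vᵀ∇F(x_t) + Δ, and x_{t+1} = (1−η)x_t + η v_t. Then for every t ≥ 0, F(x_t) − F(x_*) ≤ cᵗ·(F(x₀) − F(x_*)) + 3Δη/(2(1−c)). -/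

import Mathlib

open scoped RealInnerProductSpace
set_option maxHeartbeats 1000000


lemma grad_conv_ineq {p : ℕ} {F : EuclideanSpace ℝ (Fin p) → ℝ}
    (hFconv : ConvexOn ℝ Set.univ F) (hFdiff : Differentiable ℝ F)
    (a b : EuclideanSpace ℝ (Fin p)) :
    ⟪gradient F a, b - a⟫ ≤ F b - F a := by
  set φ : ℝ → ℝ := fun s : ℝ => F (a + s • (b - a)) with hφ
  have hline : HasDerivAt (fun s : ℝ => a + s • (b - a)) (b - a) 0 := by
    simpa using ((hasDerivAt_id (0:ℝ)).smul_const (b - a)).const_add a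
  have hFd : HasFDerivAt F (InnerProductSpace.toDual ℝ _ (gradient F a)) a :=
    (hFdiff a).hasGradientAt.hasFDerivAt
  have hFd' : HasFDerivAt F (InnerProductSpace.toDual ℝ _ (gradient F a))
      (a + (0:ℝ) • (b - a)) := by simpa using hFd
  have hd0 : HasDerivAt φ ⟪gradient F a, b - a⟫ 0 := by
    have h := hFd'.comp_hasDerivAt 0 hline
    simp only [InnerProductSpace.toDual_apply_apply] at h
    exact h
  have hφconv : ConvexOn ℝ Set.univ φ := by
    have := hFconv.comp_affineMap (AffineMap.lineMap a b)
    have heq : φ = F ∘ (AffineMap.lineMap a b : ℝ →ᵃ[ℝ] EuclideanSpace ℝ (Fin p)) := by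
      funext s
      simp only [hφ, Function.comp_apply, AffineMap.coe_lineMap]
      congr 1
      simp [AffineMap.lineMap_apply_module]
      module
    rw [heq]
    simpa using this
  have hslope := hφconv.le_slope_of_hasDerivAt (Set.mem_univ (0:ℝ)) (Set.mem_univ (1:ℝ))
    one_pos hd0
  have : slope φ 0 1 = F b - F a := by
    simp [slope_def_field, hφ]
  linarith [hslope.trans_eq this]

lemma strong_convex_is_convex {p : ℕ} {C : Set (EuclideanSpace ℝ (Fin p))} {αC : ℝ}
    (hCstrong : ∀ x ∈ C, ∀ y ∈ C, ∀ γ : ℝ, γ ∈ Set.Icc (0:ℝ) 1 →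
      ∀ z : EuclideanSpace ℝ (Fin p), ‖z‖ = 1 →
        γ • x + (1 - γ) • y + (γ * (1 - γ) * (αC / 2) * ‖x - y‖ ^ 2) • z ∈ C) :
    ∀ a ∈ C, ∀ b ∈ C, ∀ γ ∈ Set.Icc (0:ℝ) 1, γ • a + (1 - γ) • b ∈ C := by
  intro a ha b hb γ hγ
  by_cases hab : a = b
  · subst hab
    have : γ • a + (1 - γ) • a = a := by module
    rw [this]; exact ha
  · have hnpos : 0 < ‖a - b‖ := by
      rw [norm_pos_iff]; exact sub_ne_zero_of_ne hab
    set β : ℝ := αC / 2 * ‖a - b‖ with hβ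
    set f : ℝ → ℝ := fun s => s - s * (1 - s) * β with hf
    have hfc : ContinuousOn f (Set.Icc 0 1) := by fun_prop
    have hmem : γ ∈ Set.Icc (f 0) (f 1) := by
      simp only [hf]; norm_num; exact hγ
    obtain ⟨γ', hγ'mem, hγ'⟩ := intermediate_value_Icc (by norm_num : (0:ℝ) ≤ 1) hfc hmem
    set z : EuclideanSpace ℝ (Fin p) := -(‖a - b‖⁻¹ • (a - b)) with hz
    have hznorm : ‖z‖ = 1 := by
      rw [hz, norm_neg, norm_smul, norm_inv, norm_norm, inv_mul_cancel₀ hnpos.ne']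
    have hP := hCstrong a ha b hb γ' hγ'mem z hznorm
    have hkey : γ' • a + (1 - γ') • b + (γ' * (1 - γ') * (αC / 2) * ‖a - b‖ ^ 2) • z
        = γ • a + (1 - γ) • b := by
      rw [hz, smul_neg, smul_smul]
      have hsc : γ' * (1 - γ') * (αC / 2) * ‖a - b‖ ^ 2 * ‖a - b‖⁻¹ = γ' - γ := by
        rw [← hγ']
        simp only [hf, hβ]
        field_simp
        ring
      rw [hsc]
      module
    rw [hkey] at hP
    exact hP
open scoped RealInnerProductSpace

/-- Convergence of the relaxed and accelerated Frank-Wolfe method (Theorem 3.1 /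
`ACCFWV3` in the paper): over a compact, strongly convex constraint set, for a convex,
smooth function whose gradient norm is bounded below on the set, the relaxed
Frank-Wolfe iterates with constant step size `η` converge linearly up to an error
proportional to the relaxation parameter `Δ`. -/
theorem stmt_0 {p : ℕ} (C : Set (EuclideanSpace ℝ (Fin p)))
    (hCcompact : IsCompact C) (αC : ℝ) (hαC : 0 < αC)
    (hCstrong : ∀ x ∈ C, ∀ y ∈ C, ∀ γ : ℝ, γ ∈ Set.Icc (0:ℝ) 1 →
      ∀ z : EuclideanSpace ℝ (Fin p), ‖z‖ = 1 →
        γ • x + (1 - γ) • y + (γ * (1 - γ) * (αC / 2) * ‖x - y‖ ^ 2) • z ∈ C)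
    (F : EuclideanSpace ℝ (Fin p) → ℝ)
    (hFconv : ConvexOn ℝ Set.univ F) (hFdiff : Differentiable ℝ F)
    (τu : ℝ) (hτu : 0 < τu)
    (hFsmooth : ∀ x y : EuclideanSpace ℝ (Fin p),
      F x - F y - ⟪gradient F y, x - y⟫ ≤ τu / 2 * ‖x - y‖ ^ 2)
    (r : ℝ) (hr : 0 < r) (hgrad : ∀ x ∈ C, r ≤ ‖gradient F x‖)
    (xstar : EuclideanSpace ℝ (Fin p)) (hxstar : xstar ∈ C)
    (hmin : ∀ x ∈ C, F xstar ≤ F x)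
    (Δ : ℝ) (hΔ : 0 ≤ Δ) (η c : ℝ)
    (hη : η = min 1 (αC * r / (4 * τu)))
    (hc : c = max (1/2 : ℝ) (1 - αC * r / (8 * τu)))
    (x v : ℕ → EuclideanSpace ℝ (Fin p)) (hx0 : x 0 ∈ C)
    (hv : ∀ t : ℕ, v t ∈ C ∧
      ∀ u ∈ C, ⟪v t, gradient F (x t)⟫ ≤ ⟪u, gradient F (x t)⟫ + Δ)
    (hstep : ∀ t : ℕ, x (t + 1) = (1 - η) • x t + η • v t) :
    ∀ t : ℕ, F (x t) - F xstar ≤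
      c ^ t * (F (x 0) - F xstar) + 3 * Δ * η / (2 * (1 - c)) := by

  classical
  have hCconv := strong_convex_is_convex hCstrong
  have hA : (0:ℝ) < αC * r / (4 * τu) := by positivity
  have hηpos : 0 < η := by rw [hη]; exact lt_min one_pos hA
  have hηle1 : η ≤ 1 := by rw [hη]; exact min_le_left _ _
  have hηle : η ≤ αC * r / (4 * τu) := by rw [hη]; exact min_le_right _ _
  have hτη : η * (4 * τu) ≤ αC * r := (le_div_iff₀ (by positivity)).mp hηle
  have h1c : 1 - c = η / 2 := by
    have h8 : αC * r / (8 * τu) = αC * r / (4 * τu) / 2 := by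
      rw [div_div]; ring_nf
    rw [hη, hc, h8]
    rcases le_total (1:ℝ) (αC * r / (4 * τu)) with h | h
    · rw [min_eq_left h, max_eq_left (by linarith)]
      norm_num
    · rw [min_eq_right h, max_eq_right (by linarith)]
      ring
  have hc2 : (1/2:ℝ) ≤ c := by rw [hc]; exact le_max_left _ _
  have hmem : ∀ t, x t ∈ C := by
    intro t
    induction t with
    | zero => exact hx0
    | succ t ih =>
      rw [hstep t]
      have := hCconv (x t) ih (v t) (hv t).1 (1 - η)
        (Set.mem_Icc.mpr ⟨by linarith, by linarith⟩)
      simpa [show ((1:ℝ) - (1 - η)) = η by ring] using this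
  have hkey : ∀ t, F (x (t+1)) - F xstar ≤ c * (F (x t) - F xstar) + 3/2 * η * Δ := by
    intro t
    set g := gradient F (x t) with hg
    have hgn : r ≤ ‖g‖ := hgrad _ (hmem t)
    have hgpos : (0:ℝ) < ‖g‖ := lt_of_lt_of_le hr hgn
    set s := ⟪g, v t - x t⟫ with hs
    have e1 : s = ⟪v t, g⟫ - ⟪x t, g⟫ := by
      rw [hs, inner_sub_right, real_inner_comm g (v t), real_inner_comm g (x t)]
    -- (i) : s ≤ F xstar - F (x t) + Δ
    have hi : s ≤ F xstar - F (x t) + Δ := by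
      have h1 := (hv t).2 xstar hxstar
      rw [← hg] at h1
      have h2 := grad_conv_ineq hFconv hFdiff (x t) xstar
      rw [← hg] at h2
      have e2 : ⟪g, xstar - x t⟫ = ⟪xstar, g⟫ - ⟪x t, g⟫ := by
        rw [inner_sub_right, real_inner_comm g xstar, real_inner_comm g (x t)]
      rw [e2] at h2
      linarith [e1, h1, h2]
    -- (ii) : strong convexity bound
    have hii : s + αC / 4 * ‖g‖ * ‖v t - x t‖ ^ 2 ≤ 2 * Δ := by
      set z : EuclideanSpace ℝ (Fin p) := -(‖g‖⁻¹ • g) with hz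
      have hznorm : ‖z‖ = 1 := by
        rw [hz, norm_neg, norm_smul, norm_inv, norm_norm, inv_mul_cancel₀ hgpos.ne']
      have hP := hCstrong (v t) (hv t).1 (x t) (hmem t) (1/2)
        (Set.mem_Icc.mpr ⟨by norm_num, by norm_num⟩) z hznorm
      have h3 := (hv t).2 _ hP
      rw [← hg] at h3
      have hzg : ⟪z, g⟫ = -‖g‖ := by
        rw [hz, inner_neg_left, real_inner_smul_left, real_inner_self_eq_norm_sq, sq,
          ← mul_assoc, inv_mul_cancel₀ hgpos.ne', one_mul]
      rw [inner_add_left, inner_add_left, real_inner_smul_left, real_inner_smul_left,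
        real_inner_smul_left, hzg] at h3
      rw [e1]
      nlinarith [h3]
    have hii' : s + αC * r / 4 * ‖v t - x t‖ ^ 2 ≤ 2 * Δ := by
      have hmul : αC / 4 * ‖v t - x t‖ ^ 2 * r ≤ αC / 4 * ‖v t - x t‖ ^ 2 * ‖g‖ :=
        mul_le_mul_of_nonneg_left hgn (by positivity)
      nlinarith [hii, hmul]
    -- smoothness
    have hsm := hFsmooth (x (t+1)) (x t)
    rw [← hg] at hsm
    have hx1 : x (t+1) - x t = η • (v t - x t) := by rw [hstep t]; module
    rw [hx1] at hsm
    rw [real_inner_smul_right, ← hs] at hsm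
    have hnsm : ‖η • (v t - x t)‖ ^ 2 = η ^ 2 * ‖v t - x t‖ ^ 2 := by
      rw [norm_smul, mul_pow, Real.norm_eq_abs, sq_abs]
    rw [hnsm] at hsm
    -- combine
    have e0 : τu * η * ‖v t - x t‖ ^ 2 ≤ 2 * Δ - s := by
      have hint := mul_le_mul_of_nonneg_right hτη (sq_nonneg ‖v t - x t‖)
      linarith [hint, hii']
    have e3 : τu / 2 * (η ^ 2 * ‖v t - x t‖ ^ 2) ≤ η / 2 * (2 * Δ - s) := by
      calc τu / 2 * (η ^ 2 * ‖v t - x t‖ ^ 2)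
          = η / 2 * (τu * η * ‖v t - x t‖ ^ 2) := by ring
        _ ≤ η / 2 * (2 * Δ - s) := mul_le_mul_of_nonneg_left e0 (by positivity)
    have e4 : η / 2 * s ≤ η / 2 * (F xstar - F (x t) + Δ) :=
      mul_le_mul_of_nonneg_left hi (by positivity)
    have hcr : c = 1 - η / 2 := by linarith
    rw [hcr]
    linarith [hsm, e3, e4]
  have hne : η ≠ 0 := hηpos.ne'
  have hK : (1 - c) * (3 * Δ * η / (2 * (1 - c))) = 3 / 2 * η * Δ := by
    rw [h1c]
    field_simp
  intro t
  induction t with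
  | zero =>
    have hKnn : 0 ≤ 3 * Δ * η / (2 * (1 - c)) := by
      apply div_nonneg
      · have := mul_nonneg (mul_nonneg (by norm_num : (0:ℝ) ≤ 3) hΔ) hηpos.le
        linarith
      · linarith
    simp only [pow_zero, one_mul]
    linarith
  | succ t ih =>
    have h1 := hkey t
    have h2 : c * (F (x t) - F xstar)
        ≤ c * (c ^ t * (F (x 0) - F xstar) + 3 * Δ * η / (2 * (1 - c))) :=
      mul_le_mul_of_nonneg_left ih (by linarith)
    rw [pow_succ]
    nlinarith [h1, h2, hK]
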